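/- arXiv:1701.02525 — 3 statements merged into one kernel-verified Lean document; each statement's English description precedes it below -/
import Mathlib

section
/- Let p be a prime, m ≥ 1, and let a ∈ F_p[x] be a monic polynomial with deg(a) ≤ m. For a nonzero polynomial h = h_0 + h_1 x + ... + h_a x^a over F_p with leading coefficient h_a ≠ 0, define r_p(h) = 1/(p^{a+1} sin²(π h_a / p)). Then the sum of r_p(h) over all nonzero polynomials h of degree < m that are divisible by a equals (m - deg(a)) · ((p² - 1)/(3p)) · p^{-deg(a)}. -/
open Polynomial Finset
open scoped Classical

/-- The set `G_{p,m}` of polynomials over `F_p` of degree `< m`. -/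
noncomputable def Gset (p m : ℕ) [NeZero p] : Finset (Polynomial (ZMod p)) :=
  (Finset.univ : Finset (Fin m → ZMod p)).image
    (fun c => ∑ i : Fin m, Polynomial.C (c i) * Polynomial.X ^ (i : ℕ))

/-- `r_p(h) = 1/(p^{a+1} sin²(π h_a/p))` for `h` of degree `a` with leading coefficient `h_a`. -/
noncomputable def rp (p : ℕ) (h : Polynomial (ZMod p)) : ℝ :=
  1 / ((p : ℝ) ^ (h.natDegree + 1) * Real.sin (Real.pi * (h.leadingCoeff.val : ℝ) / p) ^ 2)

section Aux


-- Lemma A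
lemma sumA {n : ℕ} {z : ℂ} (hzn : z ^ n = 1) (hz : z ≠ 1) :
    (z - 1) * ∑ j ∈ range n, (j : ℂ) * z ^ j = n := by
  have key : ∀ N : ℕ, (z - 1) * ∑ j ∈ range N, (j : ℂ) * z ^ j
      = ((N : ℂ) - 1) * z ^ N - ∑ j ∈ range N, z ^ j + 1 := by
    intro N
    induction N with
    | zero => simp
    | succ N ih =>
      rw [sum_range_succ, sum_range_succ, mul_add, ih]
      push_cast
      ring
  have hg : ∑ j ∈ range n, z ^ j = 0 := by
    have := geom_sum_eq hz n
    rw [this, hzn]; simp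
  rw [key, hg, hzn]; ring

-- orthogonality
lemma sumOrth {n : ℕ} {u : ℂ} (hu : u ^ n = 1) :
    ∑ k ∈ range n, u ^ k = if u = 1 then (n : ℂ) else 0 := by
  split_ifs with h
  · simp [h]
  · rw [geom_sum_eq h, hu]; simp

lemma sum_id_c (n : ℕ) : ∑ j ∈ range n, (j:ℂ) = n * (n - 1) / 2 := by
  induction n with
  | zero => simp
  | succ N ih => rw [sum_range_succ, ih]; push_cast; ring

lemma sum_sq_c (n : ℕ) : ∑ j ∈ range n, (j:ℂ)^2 = n * (n - 1) * (2*n - 1) / 6 := by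
  induction n with
  | zero => simp
  | succ N ih => rw [sum_range_succ, ih]; push_cast; ring

lemma sum_sq_aux (n : ℕ) :
    (n : ℂ) * (∑ j ∈ range n, (j:ℂ)^2) - (∑ j ∈ range n, (j:ℂ))^2
      = (n:ℂ)^2 * ((n:ℂ)^2 - 1) / 12 := by
  rw [sum_id_c, sum_sq_c]; ring

lemma csc_sum_complex (n : ℕ) (hn : 1 ≤ n) :
    ∑ k ∈ Ico 1 n, ((1:ℂ) / ((1 - Complex.exp (2 * Real.pi * Complex.I / n) ^ k)
        * (1 - (Complex.exp (2 * Real.pi * Complex.I / n))⁻¹ ^ k)))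
      = ((n:ℂ)^2 - 1) / 12 := by
  set ω : ℂ := Complex.exp (2 * Real.pi * Complex.I / n) with hω
  have hn0 : (n:ℂ) ≠ 0 := Nat.cast_ne_zero.mpr (by omega)
  have hprim : IsPrimitiveRoot ω n := Complex.isPrimitiveRoot_exp n (by omega)
  have hωn : ω ^ n = 1 := hprim.pow_eq_one
  have hωinv : (ω⁻¹) ^ n = 1 := by rw [inv_pow, hωn, inv_one]
  -- pointwise rewrite
  have step1 : ∀ k ∈ Ico 1 n,
      (1:ℂ) / ((1 - ω ^ k) * (1 - (ω⁻¹) ^ k))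
        = (1 / (n:ℂ)^2) * ((∑ j ∈ range n, (j:ℂ) * (ω ^ k) ^ j)
            * (∑ j ∈ range n, (j:ℂ) * ((ω⁻¹) ^ k) ^ j)) := by
    intro k hk
    rw [mem_Ico] at hk
    have hz1 : ω ^ k ≠ 1 := by
      intro h
      have := (hprim.pow_eq_one_iff_dvd k).mp h
      have := Nat.le_of_dvd (by omega) this
      omega
    have hw1 : (ω⁻¹) ^ k ≠ 1 := by
      rw [inv_pow]
      intro h
      exact hz1 (by rw [← inv_inv (ω ^ k), h, inv_one])
    have hzn : (ω ^ k) ^ n = 1 := by rw [← pow_mul, mul_comm, pow_mul, hωn, one_pow]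
    have hwn : ((ω⁻¹) ^ k) ^ n = 1 := by rw [← pow_mul, mul_comm, pow_mul, hωinv, one_pow]
    have hA := sumA hzn hz1
    have hB := sumA hwn hw1
    have h1 : (ω ^ k - 1) ≠ 0 := sub_ne_zero.mpr hz1
    have h2 : ((ω⁻¹) ^ k - 1) ≠ 0 := sub_ne_zero.mpr hw1
    have hS : (∑ j ∈ range n, (j:ℂ) * (ω ^ k) ^ j) = n / (ω ^ k - 1) := by
      rw [eq_div_iff h1]; linear_combination hA
    have hS' : (∑ j ∈ range n, (j:ℂ) * ((ω⁻¹) ^ k) ^ j) = n / ((ω⁻¹) ^ k - 1) := by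
      rw [eq_div_iff h2]; linear_combination hB
    rw [hS, hS']
    have hD : (1 - ω ^ k) * (1 - (ω⁻¹) ^ k) = (ω ^ k - 1) * ((ω⁻¹) ^ k - 1) := by ring
    rw [hD, div_mul_div_comm, div_mul_div_comm,
      div_eq_div_iff (mul_ne_zero h1 h2)
        (mul_ne_zero (pow_ne_zero 2 hn0) (mul_ne_zero h1 h2))]
    ring
  rw [sum_congr rfl step1, ← mul_sum]
  have hωne : ω ≠ 0 := Complex.exp_ne_zero _
  have key : ∑ k ∈ Ico 1 n, ((∑ j ∈ range n, (j:ℂ) * (ω ^ k) ^ j)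
      * (∑ j ∈ range n, (j:ℂ) * ((ω⁻¹) ^ k) ^ j))
      = (n:ℂ) * (∑ j ∈ range n, (j:ℂ)^2) - (∑ j ∈ range n, (j:ℂ))^2 := by
    have expand : ∀ k : ℕ, ((∑ j ∈ range n, (j:ℂ) * (ω ^ k) ^ j)
        * (∑ j ∈ range n, (j:ℂ) * ((ω⁻¹) ^ k) ^ j))
        = ∑ j ∈ range n, ∑ j' ∈ range n,
            ((j:ℂ) * (j':ℂ)) * (ω ^ j * (ω⁻¹) ^ j') ^ k := by
      intro k
      rw [Finset.sum_mul_sum]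
      refine sum_congr rfl fun j _ => sum_congr rfl fun j' _ => ?_
      rw [mul_pow, ← pow_mul, ← pow_mul, ← pow_mul, ← pow_mul, mul_comm k j, mul_comm k j']
      ring
    rw [sum_congr rfl (fun k _ => expand k), sum_comm]
    rw [sum_congr rfl (fun j _ => sum_comm)]
    have inner : ∀ j ∈ range n, ∑ j' ∈ range n, ∑ k ∈ Ico 1 n,
        ((j:ℂ) * (j':ℂ)) * (ω ^ j * (ω⁻¹) ^ j') ^ k
        = (n:ℂ) * (j:ℂ)^2 - (j:ℂ) * (∑ j' ∈ range n, (j':ℂ)) := by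
      intro j hj
      have swap : ∀ j' ∈ range n, ∑ k ∈ Ico 1 n,
          ((j:ℂ) * (j':ℂ)) * (ω ^ j * (ω⁻¹) ^ j') ^ k
          = ((j:ℂ) * (j':ℂ)) * ((if j = j' then (n:ℂ) else 0) - 1) := by
        intro j' hj'
        rw [← mul_sum]
        congr 1
        set u : ℂ := ω ^ j * (ω⁻¹) ^ j' with hu
        have hun : u ^ n = 1 := by
          rw [hu, mul_pow, ← pow_mul, ← pow_mul, mul_comm j n, mul_comm j' n,
            pow_mul, pow_mul, hωn, hωinv, one_pow, one_pow, one_mul]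
        have hsplit : ∑ k ∈ range n, u ^ k = u ^ 0 + ∑ k ∈ Ico 1 n, u ^ k := by
          rw [range_eq_Ico, Finset.sum_eq_sum_Ico_succ_bot (by omega)]
        have horth : ∑ k ∈ range n, u ^ k = if u = 1 then (n:ℂ) else 0 := sumOrth hun
        have hiff : (u = 1) ↔ (j = j') := by
          rw [hu, inv_pow, mul_inv_eq_one₀ (pow_ne_zero _ hωne)]
          constructor
          · intro h
            exact hprim.pow_inj (mem_range.mp hj) (mem_range.mp hj') h
          · intro h; rw [h]
        have : (if u = 1 then (n:ℂ) else 0) = if j = j' then (n:ℂ) else 0 := by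
          simp [hiff]
        rw [← this, ← horth, hsplit, pow_zero]
        ring
      rw [sum_congr rfl swap]
      have : ∑ j' ∈ range n, ((j:ℂ) * (j':ℂ)) * ((if j = j' then (n:ℂ) else 0) - 1)
          = ∑ j' ∈ range n, (((j:ℂ) * (j':ℂ)) * (if j = j' then (n:ℂ) else 0)
              - (j:ℂ) * (j':ℂ)) := by
        refine sum_congr rfl fun j' _ => by ring
      rw [this, sum_sub_distrib, ← mul_sum]
      congr 1
      have : ∀ j' ∈ range n, ((j:ℂ) * (j':ℂ)) * (if j = j' then (n:ℂ) else 0)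
          = if j' = j then (j:ℂ) * (j':ℂ) * n else 0 := by
        intro j' _
        by_cases h : j = j' <;> simp [h, eq_comm]
      rw [sum_congr rfl this, sum_ite_eq' (range n) j (fun j' => (j:ℂ) * (j':ℂ) * n)]
      simp only [hj, if_true]
      ring
    rw [sum_congr rfl inner, sum_sub_distrib, ← mul_sum, ← sum_mul]
    ring
  rw [key, sum_sq_aux]
  field_simp

lemma csc_sum (n : ℕ) (hn : 1 ≤ n) :
    ∑ k ∈ Ico 1 n, (1 / Real.sin (Real.pi * k / n) ^ 2) = ((n:ℝ)^2 - 1) / 3 := by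
  set ω : ℂ := Complex.exp (2 * Real.pi * Complex.I / n) with hω
  have hn0 : (n:ℝ) ≠ 0 := Nat.cast_ne_zero.mpr (by omega)
  have key : ∀ k : ℕ, ((4 * Real.sin (Real.pi * k / n) ^ 2 : ℝ) : ℂ)
      = (1 - ω ^ k) * (1 - (ω⁻¹) ^ k) := by
    intro k
    set x : ℝ := Real.pi * k / n with hx
    have hωk : ω ^ k = Complex.exp ((2 * x : ℝ) * Complex.I) := by
      rw [hω, ← Complex.exp_nat_mul]
      congr 1
      push_cast [hx]
      field_simp
    have hωk' : (ω⁻¹) ^ k = Complex.exp ((-(2 * x) : ℝ) * Complex.I) := by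
      rw [inv_pow, hωk, ← Complex.exp_neg]
      congr 1
      push_cast
      ring
    rw [hωk, hωk', Complex.exp_mul_I, Complex.exp_mul_I]
    rw [← Complex.ofReal_sin, ← Complex.ofReal_cos, ← Complex.ofReal_sin, ← Complex.ofReal_cos]
    rw [Real.cos_neg, Real.sin_neg]
    have expand : (1 - ((Real.cos (2*x) : ℂ) + (Real.sin (2*x) : ℂ) * Complex.I))
        * (1 - ((Real.cos (2*x) : ℂ) + -(Real.sin (2*x) : ℂ) * Complex.I))
        = ((1 - (Real.cos (2*x) : ℂ))^2 + (Real.sin (2*x) : ℂ)^2) := by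
      have hI := Complex.I_sq
      ring_nf
      rw [Complex.I_sq]
      ring
    rw [Complex.ofReal_neg, expand]
    have hreal : (4 * Real.sin x ^ 2 : ℝ) = (1 - Real.cos (2*x))^2 + Real.sin (2*x)^2 := by
      linear_combination -Real.sin_sq_add_cos_sq (2*x) + 2 * Real.cos_two_mul x
        + 4 * Real.sin_sq_add_cos_sq x
    have hc : ((4 * Real.sin x ^ 2 : ℝ) : ℂ)
        = (((1 - Real.cos (2*x))^2 + Real.sin (2*x)^2 : ℝ) : ℂ) := by
      exact_mod_cast congrArg Complex.ofReal hreal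
    rw [hc]
    push_cast
    ring
  have main := csc_sum_complex n hn
  have cast_eq : ((∑ k ∈ Ico 1 n, (1 / (4 * Real.sin (Real.pi * k / n) ^ 2)) : ℝ) : ℂ)
      = ((n:ℂ)^2 - 1) / 12 := by
    rw [← main]
    push_cast
    refine sum_congr rfl fun k _ => ?_
    rw [← key k]
    push_cast
    ring
  have real_eq : ∑ k ∈ Ico 1 n, (1 / (4 * Real.sin (Real.pi * k / n) ^ 2)) = ((n:ℝ)^2-1)/12 := by
    have : (((((n:ℝ)^2 - 1) / 12 : ℝ)) : ℂ) = ((n:ℂ)^2 - 1) / 12 := by push_cast; ring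
    exact_mod_cast cast_eq.trans this.symm
  have : ∑ k ∈ Ico 1 n, (1 / Real.sin (Real.pi * k / n) ^ 2)
      = 4 * ∑ k ∈ Ico 1 n, (1 / (4 * Real.sin (Real.pi * k / n) ^ 2)) := by
    rw [mul_sum]
    refine sum_congr rfl fun k _ => ?_
    rw [mul_one_div, ← div_div]
    norm_num
  rw [this, real_eq]
  ring


variable {p : ℕ} [NeZero p]

lemma coeff_sum_fin (m : ℕ) (c : Fin m → ZMod p) (j : ℕ) :
    (∑ i : Fin m, Polynomial.C (c i) * Polynomial.X ^ (i : ℕ)).coeff j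
      = if h : j < m then c ⟨j, h⟩ else 0 := by
  rw [finset_sum_coeff]
  simp only [coeff_C_mul, coeff_X_pow]
  split_ifs with h
  · rw [Finset.sum_eq_single (⟨j, h⟩ : Fin m)]
    · simp
    · intro b _ hb
      have : ¬ (j = (b : ℕ)) := fun hh => hb (by ext; simp [hh.symm])
      simp [this]
    · simp
  · apply Finset.sum_eq_zero
    intro b _
    have : ¬ (j = (b : ℕ)) := fun hh => (by omega : ¬ (j < m)) (hh ▸ b.isLt)
    simp [this]

lemma mem_Gset {m : ℕ} {h : Polynomial (ZMod p)} :
    h ∈ Gset p m ↔ h.degree < (m : ℕ) := by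
  constructor
  · intro hh
    rw [Gset, Finset.mem_image] at hh
    obtain ⟨c, _, rfl⟩ := hh
    refine lt_of_le_of_lt (degree_sum_le _ _) ?_
    rw [Finset.sup_lt_iff (by exact_mod_cast WithBot.bot_lt_coe m)]
    intro i _
    exact lt_of_le_of_lt (degree_C_mul_X_pow_le _ _) (by exact_mod_cast i.isLt)
  · intro hh
    rw [Gset, Finset.mem_image]
    refine ⟨fun i => h.coeff i, Finset.mem_univ _, ?_⟩
    ext j
    rw [coeff_sum_fin]
    split_ifs with hj
    · rfl
    · exact (coeff_eq_zero_of_degree_lt (lt_of_lt_of_le hh (by exact_mod_cast by omega))).symm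

lemma card_Gset (m : ℕ) : (Gset p m).card = p ^ m := by
  rw [Gset, Finset.card_image_of_injective _ ?_, Finset.card_univ]
  · simp [Fintype.card_fun]
  · intro c d hcd
    funext i
    have := congrArg (fun q => Polynomial.coeff q (i : ℕ)) hcd
    simp only [coeff_sum_fin, i.isLt, dif_pos] at this
    simpa using this

lemma sum_zmod_csc (hp : 1 ≤ p) :
    ∑ c ∈ Finset.univ.filter (fun c : ZMod p => c ≠ 0),
      (1 / Real.sin (Real.pi * (c.val : ℝ) / p) ^ 2) = ((p:ℝ)^2 - 1) / 3 := by
  rw [← csc_sum p hp]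
  refine Finset.sum_nbij' (fun c => (ZMod.val c : ℕ)) (fun k => (k : ZMod p)) ?_ ?_ ?_ ?_ ?_
  · intro c hc
    rw [Finset.mem_filter] at hc
    have h1 : c.val < p := ZMod.val_lt c
    have h2 : c.val ≠ 0 := fun h => hc.2 (by rwa [← ZMod.val_eq_zero])
    show (ZMod.val c : ℕ) ∈ Ico 1 p
    rw [mem_Ico]
    omega
  · intro k hk
    rw [mem_Ico] at hk
    show ((k : ZMod p)) ∈ Finset.univ.filter (fun c : ZMod p => c ≠ 0)
    rw [Finset.mem_filter]
    have hv : ((k : ZMod p)).val = k := ZMod.val_natCast_of_lt hk.2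
    exact ⟨Finset.mem_univ _, fun h => by rw [h, ZMod.val_zero] at hv; omega⟩
  · intro c _; exact ZMod.natCast_zmod_val c
  · intro k hk; rw [mem_Ico] at hk; exact ZMod.val_natCast_of_lt hk.2
  · intro c _; rfl

lemma mem_Gset_nz {m : ℕ} {h : Polynomial (ZMod p)} (hz : h ≠ 0) :
    h ∈ Gset p m ↔ h.natDegree < m := by
  rw [mem_Gset, natDegree_lt_iff_degree_lt hz]

lemma slice_sum [Fact p.Prime] (M : ℕ) :
    ∑ q ∈ (Gset p (M+1)).filter (fun q => q ≠ 0 ∧ ¬(q.natDegree < M)), rp p q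
      = ((p:ℝ)^2 - 1) / (3 * p) := by
  have hp1 : 1 ≤ p := (Fact.out : p.Prime).one_lt.le
  have hpR : (0:ℝ) < p := by exact_mod_cast (Fact.out : p.Prime).pos
  have key : ∑ q ∈ (Gset p (M+1)).filter (fun q => q ≠ 0 ∧ ¬(q.natDegree < M)), rp p q
      = ∑ x ∈ (Finset.univ.filter (fun c : ZMod p => c ≠ 0)) ×ˢ Gset p M,
          1 / ((p : ℝ) ^ (M + 1) * Real.sin (Real.pi * ((x.1).val : ℝ) / p) ^ 2) := by
    refine Finset.sum_nbij' (fun q => (q.coeff M, q - Polynomial.C (q.coeff M) * Polynomial.X ^ M))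
      (fun x => Polynomial.C x.1 * Polynomial.X ^ M + x.2) ?_ ?_ ?_ ?_ ?_
    · intro q hq
      rw [Finset.mem_filter] at hq
      obtain ⟨hmem, hq0, hdeg⟩ := hq
      have hgd : q.natDegree < M + 1 := (mem_Gset_nz hq0).mp hmem
      have hnd : q.natDegree = M := by omega
      have hlc : q.coeff M ≠ 0 := by
        rw [← hnd]; exact fun h => hq0 (leadingCoeff_eq_zero.mp h)
      show (q.coeff M, q - Polynomial.C (q.coeff M) * Polynomial.X ^ M)
          ∈ (Finset.univ.filter (fun c : ZMod p => c ≠ 0)) ×ˢ Gset p M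
      rw [Finset.mem_product]
      constructor
      · exact Finset.mem_filter.mpr ⟨Finset.mem_univ _, hlc⟩
      · rw [mem_Gset, degree_lt_iff_coeff_zero]
        intro j hj
        rcases eq_or_lt_of_le hj with h | h
        · rw [coeff_sub, coeff_C_mul, coeff_X_pow, if_pos h.symm, ← h]
          ring
        · have h1 : q.coeff j = 0 := by
            apply coeff_eq_zero_of_natDegree_lt; omega
          rw [coeff_sub, coeff_C_mul, coeff_X_pow, if_neg (by omega : ¬ j = M), h1]
          ring
    · intro x hx
      rw [Finset.mem_product, Finset.mem_filter] at hx
      obtain ⟨⟨_, hc⟩, hr⟩ := hx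
      rw [mem_Gset] at hr
      have hdeg : (Polynomial.C x.1 * Polynomial.X ^ M + x.2).degree = (M : WithBot ℕ) := by
        rw [degree_add_eq_left_of_degree_lt (by rw [degree_C_mul_X_pow _ hc]; exact hr)]
        exact degree_C_mul_X_pow _ hc
      have hq0 : Polynomial.C x.1 * Polynomial.X ^ M + x.2 ≠ 0 := by
        intro h
        rw [h, degree_zero] at hdeg
        exact (by simp : ¬ ((⊥ : WithBot ℕ) = (M : ℕ))) hdeg
      have hnd := natDegree_eq_of_degree_eq_some hdeg
      show Polynomial.C x.1 * Polynomial.X ^ M + x.2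
          ∈ (Gset p (M+1)).filter (fun q => q ≠ 0 ∧ ¬(q.natDegree < M))
      rw [Finset.mem_filter]
      exact ⟨(mem_Gset_nz hq0).mpr (by omega), hq0, by omega⟩
    · intro q hq
      show Polynomial.C (q.coeff M) * Polynomial.X ^ M
          + (q - Polynomial.C (q.coeff M) * Polynomial.X ^ M) = q
      ring
    · intro x hx
      rw [Finset.mem_product, Finset.mem_filter] at hx
      obtain ⟨⟨_, hc⟩, hr⟩ := hx
      rw [mem_Gset] at hr
      have hcoeff : (Polynomial.C x.1 * Polynomial.X ^ M + x.2).coeff M = x.1 := by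
        rw [coeff_add, coeff_C_mul, coeff_X_pow, if_pos rfl,
          coeff_eq_zero_of_degree_lt hr]
        ring
      show ((Polynomial.C x.1 * Polynomial.X ^ M + x.2).coeff M,
          (Polynomial.C x.1 * Polynomial.X ^ M + x.2)
            - Polynomial.C ((Polynomial.C x.1 * Polynomial.X ^ M + x.2).coeff M)
              * Polynomial.X ^ M) = x
      rw [hcoeff]
      have h2 : (Polynomial.C x.1 * Polynomial.X ^ M + x.2)
          - Polynomial.C x.1 * Polynomial.X ^ M = x.2 := by ring
      rw [h2]
    · intro q hq
      rw [Finset.mem_filter] at hq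
      obtain ⟨hmem, hq0, hdeg⟩ := hq
      have hgd : q.natDegree < M + 1 := (mem_Gset_nz hq0).mp hmem
      have hnd : q.natDegree = M := by omega
      show rp p q = 1 / ((p : ℝ) ^ (M + 1) * Real.sin (Real.pi * ((q.coeff M).val : ℝ) / p) ^ 2)
      rw [rp, hnd, Polynomial.leadingCoeff, hnd]
  rw [key, Finset.sum_product]
  have hconst : ∀ c ∈ Finset.univ.filter (fun c : ZMod p => c ≠ 0),
      ∑ _r ∈ Gset p M, (1 / ((p : ℝ) ^ (M + 1) * Real.sin (Real.pi * ((c).val : ℝ) / p) ^ 2))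
      = (p:ℝ)^M * (1 / ((p : ℝ) ^ (M + 1) * Real.sin (Real.pi * ((c).val : ℝ) / p) ^ 2)) := by
    intro c _
    rw [Finset.sum_const, card_Gset, nsmul_eq_mul]
    push_cast
    ring
  rw [Finset.sum_congr rfl hconst]
  have : ∀ c ∈ Finset.univ.filter (fun c : ZMod p => c ≠ 0),
      (p:ℝ)^M * (1 / ((p : ℝ) ^ (M + 1) * Real.sin (Real.pi * ((c).val : ℝ) / p) ^ 2))
      = (1/p) * (1 / Real.sin (Real.pi * ((c).val : ℝ) / p) ^ 2) := by
    intro c _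
    rw [show (p:ℝ)^(M+1) * Real.sin (Real.pi * ((c).val : ℝ)/p)^2
        = (p:ℝ)^M * ((p:ℝ) * Real.sin (Real.pi * ((c).val : ℝ)/p)^2) by ring,
      one_div, mul_inv, ← mul_assoc, mul_inv_cancel₀ (pow_ne_zero M hpR.ne'), one_mul,
      one_div, one_div, mul_inv]
  rw [Finset.sum_congr rfl this, ← Finset.mul_sum, sum_zmod_csc hp1,
    div_mul_div_comm, one_mul, mul_comm (p:ℝ) 3]

lemma sum_rp_Gset [Fact p.Prime] (M : ℕ) :
    ∑ q ∈ (Gset p M).filter (fun q => q ≠ 0), rp p q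
      = (M : ℝ) * (((p:ℝ)^2 - 1) / (3 * p)) := by
  induction M with
  | zero =>
    have he : (Gset p 0).filter (fun q => q ≠ 0) = ∅ := by
      rw [Finset.eq_empty_iff_forall_notMem]
      intro q hq
      rw [Finset.mem_filter, mem_Gset] at hq
      have h0 := zero_le_degree_iff.mpr hq.2
      have := lt_of_le_of_lt h0 hq.1
      simp at this
    rw [he]
    simp
  | succ M ih =>
    have split := Finset.sum_filter_add_sum_filter_not
      ((Gset p (M+1)).filter (fun q => q ≠ 0)) (fun q => q.natDegree < M) (rp p)
    rw [Finset.filter_filter, Finset.filter_filter] at split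
    have e1 : (Gset p (M+1)).filter (fun q => q ≠ 0 ∧ q.natDegree < M)
        = (Gset p M).filter (fun q => q ≠ 0) := by
      ext q
      simp only [Finset.mem_filter]
      constructor
      · rintro ⟨_, hq0, hd⟩
        exact ⟨(mem_Gset_nz hq0).mpr hd, hq0⟩
      · rintro ⟨hm, hq0⟩
        have hd := (mem_Gset_nz hq0).mp hm
        exact ⟨(mem_Gset_nz hq0).mpr (by omega), hq0, hd⟩
    rw [e1, ih, slice_sum M] at split
    rw [← split]
    push_cast
    ring


end Aux

theorem sum_rp_dvd (p : ℕ) [Fact p.Prime] (m : ℕ) (hm : 1 ≤ m)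
    (a : Polynomial (ZMod p)) (ha : a.Monic) (hadeg : a.natDegree ≤ m) :
    ∑ h ∈ (Gset p m).filter (fun h => h ≠ 0 ∧ a ∣ h), rp p h
      = ((m : ℝ) - (a.natDegree : ℝ)) * (((p : ℝ) ^ 2 - 1) / (3 * p))
        * (p : ℝ) ^ (-(a.natDegree : ℤ)) := by
  have ha0 : a ≠ 0 := ha.ne_zero
  set aN := a.natDegree with haN
  set M := m - aN with hM
  have himg : (Gset p m).filter (fun h => h ≠ 0 ∧ a ∣ h)
      = ((Gset p M).filter (fun q => q ≠ 0)).image (fun q => a * q) := by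
    ext h
    simp only [Finset.mem_filter, Finset.mem_image]
    constructor
    · rintro ⟨hmem, hh0, hdvd⟩
      refine ⟨h /ₘ a, ?_, ?_⟩
      · have hmod : h %ₘ a = 0 := (modByMonic_eq_zero_iff_dvd ha).mpr hdvd
        have heq : a * (h /ₘ a) = h := by
          have := modByMonic_add_div h a
          rw [hmod, zero_add] at this
          exact this
        have hq0 : h /ₘ a ≠ 0 := fun hz => hh0 (by rw [← heq, hz, mul_zero])
        refine ⟨(mem_Gset_nz hq0).mpr ?_, hq0⟩
        have hnd : (a * (h /ₘ a)).natDegree = aN + (h /ₘ a).natDegree :=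
          natDegree_mul ha0 hq0
        rw [heq] at hnd
        have hlt : h.natDegree < m := (mem_Gset_nz hh0).mp hmem
        omega
      · have hmod : h %ₘ a = 0 := (modByMonic_eq_zero_iff_dvd ha).mpr hdvd
        have := modByMonic_add_div h a
        rw [hmod, zero_add] at this
        exact this
    · rintro ⟨q, hq, rfl⟩
      obtain ⟨hqm, hq0⟩ := hq
      have hq0' : a * q ≠ 0 := mul_ne_zero ha0 hq0
      have hqd : q.natDegree < M := (mem_Gset_nz hq0).mp hqm
      refine ⟨(mem_Gset_nz hq0').mpr ?_, hq0', Dvd.intro q rfl⟩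
      rw [natDegree_mul ha0 hq0]
      omega
  rw [himg, Finset.sum_image (fun x _ y _ h => mul_right_injective₀ ha0 h)]
  have hval : ∀ q ∈ (Gset p M).filter (fun q => q ≠ 0),
      rp p (a * q) = ((p:ℝ) ^ aN)⁻¹ * rp p q := by
    intro q hq
    rw [Finset.mem_filter] at hq
    have hq0 := hq.2
    rw [rp, rp, natDegree_mul ha0 hq0, leadingCoeff_mul, ha.leadingCoeff, one_mul]
    rw [show aN + q.natDegree + 1 = aN + (q.natDegree + 1) by omega, pow_add,
      one_div, one_div, mul_assoc, mul_inv]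
  rw [Finset.sum_congr rfl hval, ← Finset.mul_sum, sum_rp_Gset M]
  have hcast : (M : ℝ) = (m : ℝ) - (aN : ℝ) := by
    rw [hM, Nat.cast_sub hadeg]
  rw [hcast, zpow_neg, zpow_natCast]
  ring
end

section
/- Let (γ_j)_{j≥1} be a summable sequence of positive reals with γ_j ≤ 1, and set γ_𝔲 := Π_{j∈𝔲} γ_j for finite 𝔲 ⊆ ℕ. Then for all N ≥ 1 and s ≥ 1, Σ_{∅≠𝔲⊆[s]} γ_𝔲 (1 - (1 - 1/N)^{|𝔲|}) ≤ max(1, Γ) · e^{Σ_{i=1}^∞ γ_i} / N, where Γ := Σ_{i=1}^∞ γ_i/(1+γ_i). -/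
open Finset

lemma pow_sum (γ : ℕ → ℝ) (S : Finset ℕ) :
    ∑ u ∈ S.powerset, ∏ j ∈ u, γ j = ∏ i ∈ S, (1 + γ i) := by
  simp_rw [add_comm (1:ℝ)]
  rw [Finset.prod_add]
  simp

lemma key_id (γ : ℕ → ℝ) (hpos : ∀ i, 0 < γ i) (S : Finset ℕ) :
    ∑ u ∈ S.powerset, (∏ j ∈ u, γ j) * (u.card : ℝ)
      = (∏ i ∈ S, (1 + γ i)) * ∑ j ∈ S, γ j / (1 + γ j) := by
  classical
  induction S using Finset.induction with
  | empty => simp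
  | insert a S ha ih =>
    rw [Finset.sum_powerset_insert ha]
    have h2 : ∑ t ∈ S.powerset, (∏ j ∈ insert a t, γ j) * ((insert a t).card : ℝ)
        = ∑ t ∈ S.powerset, γ a * ((∏ j ∈ t, γ j) * (t.card : ℝ) + ∏ j ∈ t, γ j) := by
      refine Finset.sum_congr rfl fun t ht => ?_
      have hat : a ∉ t := fun h => ha (Finset.mem_powerset.mp ht h)
      rw [Finset.prod_insert hat, Finset.card_insert_of_notMem hat]
      push_cast; ring
    rw [h2, ← Finset.mul_sum]
    have hg : (0:ℝ) < 1 + γ a := by linarith [hpos a]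
    rw [Finset.prod_insert ha, Finset.sum_insert ha,
      Finset.sum_add_distrib, ih, pow_sum]
    field_simp
    ring

/-- Joe's bound: for summable product weights `γ` (here `γ i` is the weight `γ_{i+1}` of the
paper, i.e. indices are shifted by one),
`Σ_{∅≠𝔲⊆[s]} γ_𝔲 (1 - (1-1/N)^{|𝔲|}) ≤ max(1,Γ) e^{Σ γ_i} / N` where
`Γ = Σ_i γ_i/(1+γ_i)`. -/
theorem joe_bound (γ : ℕ → ℝ) (hpos : ∀ i, 0 < γ i) (hle : ∀ i, γ i ≤ 1)
    (hsum : Summable γ) (N s : ℕ) (hN : 1 ≤ N) (hs : 1 ≤ s) :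
    ∑ u ∈ (Finset.range s).powerset.filter (fun u => u ≠ ∅),
        (∏ j ∈ u, γ j) * (1 - (1 - 1 / (N : ℝ)) ^ u.card)
      ≤ max 1 (∑' i, γ i / (1 + γ i)) * Real.exp (∑' i, γ i) / N := by
  have hNpos : (0:ℝ) < N := by exact_mod_cast hN
  have hγ0 : ∀ i, (0:ℝ) ≤ γ i := fun i => (hpos i).le
  -- Step 1: bound each term by γ_u * |u| / N
  have step1 : ∑ u ∈ (Finset.range s).powerset.filter (fun u => u ≠ ∅),
      (∏ j ∈ u, γ j) * (1 - (1 - 1 / (N : ℝ)) ^ u.card)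
      ≤ ∑ u ∈ (Finset.range s).powerset, (∏ j ∈ u, γ j) * (u.card : ℝ) / N := by
    refine le_trans (Finset.sum_le_sum (fun u _ => ?_)) (Finset.sum_le_sum_of_subset_of_nonneg
      (Finset.filter_subset _ _) (fun u _ _ => ?_))
    · have hprod : (0:ℝ) ≤ ∏ j ∈ u, γ j := Finset.prod_nonneg fun j _ => hγ0 j
      have hb : 1 - (1 - 1 / (N : ℝ)) ^ u.card ≤ u.card / N := by
        have := one_add_mul_le_pow (a := -(1 / (N:ℝ))) (by
          have : 1/(N:ℝ) ≤ 1 := by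
            rw [div_le_one hNpos]; exact_mod_cast hN
          linarith) u.card
        have h' : 1 + (u.card:ℝ) * (-(1/N)) ≤ (1 - 1/N) ^ u.card := by
          simpa [sub_eq_add_neg] using this
        have heq : (u.card:ℝ) * (1/N) = u.card / N := by ring
        linarith
      calc (∏ j ∈ u, γ j) * (1 - (1 - 1 / (N : ℝ)) ^ u.card)
          ≤ (∏ j ∈ u, γ j) * ((u.card:ℝ) / N) := by
            exact mul_le_mul_of_nonneg_left hb hprod
        _ = (∏ j ∈ u, γ j) * (u.card : ℝ) / N := by ring
    · exact div_nonneg (mul_nonneg (Finset.prod_nonneg fun j _ => hγ0 j) (Nat.cast_nonneg _)) hNpos.le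
  -- Step 2: identity
  have step2 : ∑ u ∈ (Finset.range s).powerset, (∏ j ∈ u, γ j) * (u.card : ℝ) / N
      = (∏ i ∈ Finset.range s, (1 + γ i)) * (∑ j ∈ Finset.range s, γ j / (1 + γ j)) / N := by
    rw [← Finset.sum_div, key_id γ hpos]
  -- Step 3: bound
  have hsum2 : Summable (fun i => γ i / (1 + γ i)) := by
    refine Summable.of_nonneg_of_le (fun i => div_nonneg (hγ0 i) (by linarith [hpos i])) (fun i => ?_) hsum
    rw [div_le_iff₀ (by linarith [hpos i])]
    nlinarith [hpos i]
  have hprodle : (∏ i ∈ Finset.range s, (1 + γ i)) ≤ Real.exp (∑' i, γ i) := by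
    calc (∏ i ∈ Finset.range s, (1 + γ i)) ≤ ∏ i ∈ Finset.range s, Real.exp (γ i) := by
          refine Finset.prod_le_prod (fun i _ => by linarith [hpos i]) (fun i _ => ?_)
          linarith [Real.add_one_le_exp (γ i)]
      _ = Real.exp (∑ i ∈ Finset.range s, γ i) := (Real.exp_sum _ _).symm
      _ ≤ Real.exp (∑' i, γ i) := Real.exp_le_exp.mpr (Summable.sum_le_tsum _ (fun i _ => hγ0 i) hsum)
  have hsumle : (∑ j ∈ Finset.range s, γ j / (1 + γ j)) ≤ max 1 (∑' i, γ i / (1 + γ i)) :=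
    le_trans (Summable.sum_le_tsum _ (fun i _ => div_nonneg (hγ0 i) (by linarith [hpos i])) hsum2)
      (le_max_right _ _)
  have h1 : (0:ℝ) ≤ ∑ j ∈ Finset.range s, γ j / (1 + γ j) :=
    Finset.sum_nonneg fun j _ => div_nonneg (hγ0 j) (by linarith [hpos j])
  have hAB : (∏ i ∈ Finset.range s, (1 + γ i)) * (∑ j ∈ Finset.range s, γ j / (1 + γ j))
      ≤ max 1 (∑' i, γ i / (1 + γ i)) * Real.exp (∑' i, γ i) := by
    rw [mul_comm (max 1 (∑' i, γ i / (1 + γ i)))]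
    exact mul_le_mul hprodle hsumle h1 (Real.exp_pos _).le
  refine le_trans step1 ?_
  rw [step2]
  gcongr
end

section
/- Let p be prime, m ≥ 1, s ≥ 1, f ∈ F_p[x] with deg f = m, g ∈ G_{p,m}^s, d ∈ [s-1], and product weights γ_i ∈ (0,1]. Then R^{d+1}_γ((g, g_{d+1}), f) = (1 + γ_{d+1}) R^d_γ(g, f) + θ(g_{d+1}), where θ(g_{d+1}) := Σ_{h_{d+1} ∈ G_{p,m}\{0}} r_p(h_{d+1}, γ_{d+1}) Σ_{h ∈ G_{p,m}^d, h·g ≡ -h_{d+1} g_{d+1} mod f} Π_{i=1}^d r_p(h_i, γ_i). -/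
open Polynomial Finset
open scoped Classical

/-- `r_p(h,γ) = 1+γ` if `h = 0` and `γ r_p(h)` otherwise. -/
noncomputable def rpw (p : ℕ) (h : Polynomial (ZMod p)) (γ : ℝ) : ℝ :=
  if h = 0 then 1 + γ else γ * rp p h

/-- The quantity `R^d_γ(g,f)` for product weights `γ`. -/
noncomputable def Rq (p m : ℕ) [NeZero p] (d : ℕ) (f : Polynomial (ZMod p))
    (g : Fin d → Polynomial (ZMod p)) (γ : ℕ → ℝ) : ℝ :=
  ∑ h ∈ (Fintype.piFinset fun _ : Fin d => Gset p m).filter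
      (fun h => h ≠ 0 ∧ f ∣ ∑ i, h i * g i),
    ∏ i, rpw p (h i) (γ (i : ℕ))

lemma sum_snoc_aux {p m : ℕ} [NeZero p] (d : ℕ)
    (F : (Fin (d+1) → Polynomial (ZMod p)) → ℝ) :
    ∑ h ∈ Fintype.piFinset (fun _ : Fin (d+1) => Gset p m), F h
      = ∑ h1 ∈ Gset p m, ∑ h ∈ Fintype.piFinset (fun _ : Fin d => Gset p m),
          F (Fin.snoc h h1) := by
  rw [← Finset.sum_product']
  refine Finset.sum_nbij' (i := fun h => (h (Fin.last d), Fin.init h))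
    (j := fun x => Fin.snoc x.2 x.1) ?_ ?_ ?_ ?_ ?_
  · intro a ha
    simp only [Fintype.mem_piFinset] at ha
    simp [Finset.mem_product, Fintype.mem_piFinset, Fin.init, ha]
  · intro a ha
    simp only [Finset.mem_product, Fintype.mem_piFinset] at ha
    simp only [Fintype.mem_piFinset]
    intro i
    refine Fin.lastCases ?_ ?_ i
    · simpa using ha.1
    · intro j; simpa using ha.2 j
  · intro a _; exact Fin.snoc_init_self a
  · intro a _; simp
  · intro a _; rw [Fin.snoc_init_self]

/-- Decomposition `R^{d+1}_γ((g, g_{d+1}), f) = (1+γ_{d+1}) R^d_γ(g,f) + θ(g_{d+1})`.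
(Indices are shifted: index `i : ℕ` corresponds to `i+1` in the paper, so `γ (d)` is the
paper's `γ_{d+1}`.) -/
theorem R_recursion (p : ℕ) [Fact p.Prime] (m s : ℕ) (hm : 1 ≤ m) (hs : 1 ≤ s)
    (f : Polynomial (ZMod p)) (hfdeg : f.degree = (m : ℕ))
    (d : ℕ) (hd1 : 1 ≤ d) (hd2 : d ≤ s - 1)
    (g : Fin d → Polynomial (ZMod p)) (hg : ∀ i, g i ∈ Gset p m)
    (γ : ℕ → ℝ) (hγ : ∀ i, γ i ∈ Set.Ioc (0 : ℝ) 1)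
    (gd1 : Polynomial (ZMod p)) :
    Rq p m (d + 1) f (Fin.snoc g gd1) γ
      = (1 + γ d) * Rq p m d f g γ
        + ∑ h1 ∈ (Gset p m).filter (fun h => h ≠ 0),
            rpw p h1 (γ d) *
              ∑ h ∈ (Fintype.piFinset fun _ : Fin d => Gset p m).filter
                  (fun h => f ∣ (∑ i, h i * g i) + h1 * gd1),
                ∏ i, rpw p (h i) (γ (i : ℕ)) := by
  have h0G : (0 : Polynomial (ZMod p)) ∈ Gset p m := by
    refine Finset.mem_image.2 ⟨0, Finset.mem_univ _, ?_⟩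
    simp
  have hsnoc0 : ∀ h : Fin d → Polynomial (ZMod p),
      ((Fin.snoc h (0 : Polynomial (ZMod p)) : Fin (d+1) → Polynomial (ZMod p)) = 0) ↔ h = 0 := by
    intro h
    constructor
    · intro hh; funext i
      have := congrFun hh (Fin.castSucc i)
      simpa using this
    · rintro rfl; funext i
      refine Fin.lastCases ?_ ?_ i <;> simp
  unfold Rq
  rw [Finset.sum_filter, sum_snoc_aux]
  simp only [Fin.sum_univ_castSucc, Fin.prod_univ_castSucc, Fin.snoc_castSucc,
    Fin.snoc_last, Fin.coe_castSucc, Fin.val_last]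
  rw [← Finset.add_sum_erase _ _ h0G]
  have term0 : (∑ h ∈ Fintype.piFinset (fun _ : Fin d => Gset p m),
      if ((Fin.snoc h (0:Polynomial (ZMod p)) : Fin (d+1) → Polynomial (ZMod p)) ≠ 0 ∧
          f ∣ (∑ i : Fin d, h i * g i) + 0 * gd1) then
        (∏ i : Fin d, rpw p (h i) (γ i)) * rpw p 0 (γ d) else 0)
      = (1 + γ d) * Rq p m d f g γ := by
    rw [Rq, Finset.sum_filter, Finset.mul_sum]
    refine Finset.sum_congr rfl fun h _ => ?_
    have : rpw p (0 : Polynomial (ZMod p)) (γ d) = 1 + γ d := by simp [rpw]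
    simp only [ne_eq, hsnoc0 h]
    simp only [zero_mul, add_zero, this]
    by_cases hc : h ≠ 0 ∧ f ∣ ∑ i : Fin d, h i * g i
    · rw [if_pos hc, if_pos hc, mul_comm]
    · rw [if_neg hc, if_neg hc, mul_zero]
  rw [term0]
  congr 1
  rw [← Finset.filter_ne' (Gset p m) 0]
  refine Finset.sum_congr rfl fun h1 hh1 => ?_
  have h1ne : h1 ≠ 0 := (Finset.mem_filter.1 hh1).2
  rw [Finset.mul_sum, Finset.sum_filter]
  refine Finset.sum_congr rfl fun h _ => ?_
  have hsne : Fin.snoc h h1 ≠ (0 : Fin (d+1) → Polynomial (ZMod p)) := by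
    intro hc
    exact h1ne (by simpa using congrFun hc (Fin.last d))
  by_cases hc : f ∣ (∑ i : Fin d, h i * g i) + h1 * gd1
  · rw [if_pos ⟨hsne, hc⟩, if_pos hc]; ring
  · rw [if_neg (fun h' => hc h'.2), if_neg hc]
end
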